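/- For a,b in L^∞(T), ‖S_{a,b}‖ = ‖a‖_∞ + ‖b‖_∞ if and only if a = 0 a.e. or b = 0 a.e. -/

import Mathlib

open MeasureTheory Complex Real AddCircle
open scoped ENNReal ComplexConjugate

noncomputable section

instance : Fact (0 < 2 * π) := ⟨by positivity⟩

/-- Normalized Haar (Lebesgue) measure on the unit circle, realized as `AddCircle (2π)`. -/
abbrev μT : Measure (AddCircle (2 * π)) := AddCircle.haarAddCircle

/-- The Lebesgue space `L²(𝕋)`. -/
abbrev L2 : Type := Lp ℂ 2 μT

/-- The space `L^∞(𝕋)`. -/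
abbrev Linf : Type := Lp ℂ ∞ μT

/-- Multiplication of an `L²` function by an `L^∞` function, as an element of `L²`. -/
def mul2 (a : Linf) (f : L2) : L2 :=
  ((Lp.memLp f).smul (Lp.memLp a)).toLp ((a : AddCircle (2 * π) → ℂ) • (f : AddCircle (2 * π) → ℂ))

lemma mul2_coe (a : Linf) (f : L2) :
    (mul2 a f : AddCircle (2 * π) → ℂ) =ᵐ[μT] fun x => a x * f x :=
  (MemLp.coeFn_toLp _)

/-- Multiplication in `L^∞`. -/
def mulInf (a b : Linf) : Linf :=
  ((Lp.memLp b).smul (Lp.memLp a)).toLp ((a : AddCircle (2 * π) → ℂ) • (b : AddCircle (2 * π) → ℂ))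

lemma mulInf_coe (a b : Linf) :
    (mulInf a b : AddCircle (2 * π) → ℂ) =ᵐ[μT] fun x => a x * b x :=
  (MemLp.coeFn_toLp _)

/-- Complex conjugation on `Lp`. -/
def conjLp {p : ℝ≥0∞} [Fact (1 ≤ p)] (f : Lp ℂ p μT) : Lp ℂ p μT :=
  MemLp.toLp (fun x => conj (f x))
    ⟨continuous_star.comp_aestronglyMeasurable (Lp.aestronglyMeasurable f),
      by
        rw [eLpNorm_congr_norm_ae (g := (f : AddCircle (2 * π) → ℂ))
          (Filter.Eventually.of_forall fun x => by simp)]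
        exact (Lp.memLp f).2⟩

lemma conjLp_coe {p : ℝ≥0∞} [Fact (1 ≤ p)] (f : Lp ℂ p μT) :
    (conjLp f : AddCircle (2 * π) → ℂ) =ᵐ[μT] fun x => conj (f x) :=
  (MemLp.coeFn_toLp _)

/-- The Hardy space `H²`, as the subspace of `L²(𝕋)` of functions whose negative Fourier
coefficients vanish. -/
def Hardy : Submodule ℂ L2 where
  carrier := {f | ∀ n : ℤ, n < 0 → fourierBasis.repr f n = 0}
  add_mem' := fun hf hg n hn => by simp [hf n hn, hg n hn]
  zero_mem' := fun n hn => by simp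
  smul_mem' := fun c f hf n hn => by simp [hf n hn]

lemma hardy_isClosed : IsClosed (Hardy : Set L2) := by
  have h : (Hardy : Set L2)
      = ⋂ n : ℤ, ⋂ _ : n < 0, {f : L2 | fourierBasis.repr f n = 0} := by
    ext f
    simp [Hardy, Set.mem_iInter]
  rw [h]
  refine isClosed_iInter fun n => isClosed_iInter fun hn => ?_
  have hc : Continuous fun f : L2 => fourierBasis.repr f n := by
    have : (fun f : L2 => fourierBasis.repr f n)
        = fun f : L2 => (innerSL ℂ (fourierBasis n : L2)) f := by
      ext f
      rw [HilbertBasis.repr_apply_apply]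
      rfl
    rw [this]
    exact (innerSL ℂ (fourierBasis n : L2)).continuous
  exact isClosed_eq hc continuous_const

instance : CompleteSpace Hardy := hardy_isClosed.completeSpace_coe

/-- The Riesz projection `P⁺ : L² → L²`, i.e. the orthogonal projection onto `H²`. -/
def Pplus : L2 →L[ℂ] L2 := Hardy.subtypeL.comp Hardy.orthogonalProjectionOnto

/-- The complementary projection `P⁻ = I - P⁺`. -/
def Pminus : L2 →L[ℂ] L2 := ContinuousLinearMap.id ℂ L2 - Pplus

lemma mul2_norm_le (a : Linf) (f : L2) : ‖mul2 a f‖ ≤ ‖a‖ * ‖f‖ := by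
  rw [mul2, Lp.norm_toLp]
  have h := eLpNorm_smul_le_eLpNorm_top_mul_eLpNorm 2
    (Lp.aestronglyMeasurable f) (φ := (a : AddCircle (2 * π) → ℂ))
  refine le_trans (ENNReal.toReal_mono ?_ h) ?_
  · exact ENNReal.mul_ne_top (Lp.memLp a).2.ne (Lp.memLp f).2.ne
  · rw [ENNReal.toReal_mul, Lp.norm_def, Lp.norm_def]

/-- Multiplication by an `L^∞` function `a`, as a bounded operator `M_a` on `L²`. -/
def Mult (a : Linf) : L2 →L[ℂ] L2 :=
  LinearMap.mkContinuous
    { toFun := mul2 a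
      map_add' := fun f g => by
        refine Lp.ext ?_
        filter_upwards [mul2_coe a (f + g), mul2_coe a f, mul2_coe a g,
          Lp.coeFn_add f g, Lp.coeFn_add (mul2 a f) (mul2 a g)] with x h1 h2 h3 h4 h5
        simp only [h1, h5, Pi.add_apply, h2, h3, h4, mul_add]
      map_smul' := fun c f => by
        refine Lp.ext ?_
        filter_upwards [mul2_coe a (c • f), mul2_coe a f,
          Lp.coeFn_smul c f, Lp.coeFn_smul c (mul2 a f)] with x h1 h2 h3 h4
        simp only [h1, h4, Pi.smul_apply, h2, h3, smul_eq_mul, RingHom.id_apply]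
        ring }
    ‖a‖ (fun f => mul2_norm_le a f)

/-- The paired operator `S_{a,b} = a P⁺ + b P⁻` on `L²(𝕋)`. -/
def pairedS (a b : Linf) : L2 →L[ℂ] L2 :=
  (Mult a).comp Pplus + (Mult b).comp Pminus

/-- The transposed paired operator `Σ_{a,b} = P⁺ a + P⁻ b` on `L²(𝕋)`. -/
def pairedSigma (a b : Linf) : L2 →L[ℂ] L2 :=
  Pplus.comp (Mult a) + Pminus.comp (Mult b)

/-- Membership in `H^∞`: an `L^∞` function whose negative Fourier coefficients vanish. -/
def MemHinf (a : Linf) : Prop := ∀ n : ℤ, n < 0 → fourierCoeff (a : AddCircle (2 * π) → ℂ) n = 0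

/-- A pair `{a,b}` is nondegenerate if `a`, `b` and `a - b` are all nonzero a.e. on `𝕋`. -/
def Nondegenerate (a b : Linf) : Prop :=
  (∀ᵐ x ∂μT, a x ≠ 0) ∧ (∀ᵐ x ∂μT, b x ≠ 0) ∧ (∀ᵐ x ∂μT, a x - b x ≠ 0)


lemma pairedS_apply (a b : Linf) (f : L2) :
    pairedS a b f = mul2 a (Pplus f) + mul2 b (Pminus f) := rfl

lemma Pplus_mem (f : L2) : Pplus f ∈ Hardy := by
  simp only [Pplus, ContinuousLinearMap.comp_apply]
  exact SetLike.coe_mem (Hardy.orthogonalProjectionOnto f)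

lemma Pplus_add_Pminus (f : L2) : Pplus f + Pminus f = f := by
  simp [Pminus]

lemma inner_Pplus_Pminus (f : L2) : (inner ℂ (Pplus f) (Pminus f) : ℂ) = 0 := by
  refine Submodule.inner_right_of_mem_orthogonal (Pplus_mem f) ?_
  have : Pminus f = f - (Hardy.orthogonalProjectionOnto f : L2) := rfl
  rw [this]
  exact Hardy.sub_starProjection_mem_orthogonal f

lemma pythagoras (f : L2) : ‖Pplus f‖ ^ 2 + ‖Pminus f‖ ^ 2 = ‖f‖ ^ 2 := by
  have h := norm_add_sq_eq_norm_sq_add_norm_sq_of_inner_eq_zero (Pplus f) (Pminus f)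
    (inner_Pplus_Pminus f)
  rw [Pplus_add_Pminus] at h
  linarith

lemma Pminus_norm_le (f : L2) : ‖Pminus f‖ ≤ ‖f‖ := by
  have h := pythagoras f
  nlinarith [norm_nonneg (Pminus f), norm_nonneg f, sq_nonneg (‖Pplus f‖)]

lemma Pplus_norm_le (f : L2) : ‖Pplus f‖ ≤ ‖f‖ := by
  have h := pythagoras f
  nlinarith [norm_nonneg (Pplus f), norm_nonneg f]

lemma Pplus_eq_zero {h : L2} (hh : h ∈ Hardyᗮ) : Pplus h = 0 := by
  simp only [Pplus, ContinuousLinearMap.comp_apply,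
    Submodule.orthogonalProjectionOnto_apply_of_mem_orthogonal hh]
  simp

lemma Pplus_eq_self {h : L2} (hh : h ∈ Hardy) : Pplus h = h := by
  simp only [Pplus, ContinuousLinearMap.comp_apply]
  exact Hardy.starProjection_eq_self_iff.mpr hh

lemma Pminus_eq_self {h : L2} (hh : h ∈ Hardyᗮ) : Pminus h = h := by
  have : Pminus h = h - Pplus h := rfl
  rw [this, Pplus_eq_zero hh, sub_zero]

lemma Pminus_eq_zero {h : L2} (hh : h ∈ Hardy) : Pminus h = 0 := by
  have : Pminus h = h - Pplus h := rfl
  rw [this, Pplus_eq_self hh, sub_self]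
lemma cauchy2 {A B x y : ℝ} (hA : 0 ≤ A) (hB : 0 ≤ B) (hx : 0 ≤ x) (hy : 0 ≤ y) :
    A * x + B * y ≤ Real.sqrt (A ^ 2 + B ^ 2) * Real.sqrt (x ^ 2 + y ^ 2) := by
  have h1 : (A * x + B * y) ^ 2 ≤ (A ^ 2 + B ^ 2) * (x ^ 2 + y ^ 2) := by
    nlinarith [sq_nonneg (A * y - B * x)]
  have h2 : A * x + B * y = Real.sqrt ((A * x + B * y) ^ 2) :=
    (Real.sqrt_sq (by positivity)).symm
  rw [h2, ← Real.sqrt_mul (by positivity)]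
  exact Real.sqrt_le_sqrt h1

lemma pairedS_norm_le_sqrt (a b : Linf) :
    ‖pairedS a b‖ ≤ Real.sqrt (‖a‖ ^ 2 + ‖b‖ ^ 2) := by
  refine ContinuousLinearMap.opNorm_le_bound _ (Real.sqrt_nonneg _) fun f => ?_
  rw [pairedS_apply]
  calc ‖mul2 a (Pplus f) + mul2 b (Pminus f)‖
      ≤ ‖mul2 a (Pplus f)‖ + ‖mul2 b (Pminus f)‖ := norm_add_le _ _
    _ ≤ ‖a‖ * ‖Pplus f‖ + ‖b‖ * ‖Pminus f‖ :=
        add_le_add (mul2_norm_le a _) (mul2_norm_le b _)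
    _ ≤ Real.sqrt (‖a‖ ^ 2 + ‖b‖ ^ 2) * Real.sqrt (‖Pplus f‖ ^ 2 + ‖Pminus f‖ ^ 2) :=
        cauchy2 (norm_nonneg _) (norm_nonneg _) (norm_nonneg _) (norm_nonneg _)
    _ = Real.sqrt (‖a‖ ^ 2 + ‖b‖ ^ 2) * ‖f‖ := by
        rw [pythagoras f, Real.sqrt_sq (norm_nonneg f)]

/-- The character `e_m` as an element of `L^∞`. -/
def eInf (m : ℤ) : Linf := fourierLp ∞ m

lemma eInf_coe (m : ℤ) : (eInf m : AddCircle (2 * π) → ℂ) =ᵐ[μT] fourier m :=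
  coeFn_fourierLp ∞ m

lemma norm_fourier (m : ℤ) (x : AddCircle (2 * π)) : ‖fourier m x‖ = 1 := by
  rw [fourier_apply]; exact Circle.norm_coe _

lemma Mult_apply (a : Linf) (f : L2) : Mult a f = mul2 a f := rfl

/-- The shift operator: multiplication by `e_m`. -/
def U (m : ℤ) : L2 →L[ℂ] L2 := Mult (eInf m)

lemma U_apply_coe (m : ℤ) (f : L2) :
    (U m f : AddCircle (2 * π) → ℂ) =ᵐ[μT] fun x => fourier m x * f x := by
  rw [U, Mult_apply]
  filter_upwards [mul2_coe (eInf m) f, eInf_coe m] with x h1 h2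
  rw [h1, h2]

lemma U_apply_basis (m i : ℤ) : U m (fourierBasis i) = fourierBasis (m + i) := by
  have hcoe : ∀ k : ℤ, (fourierBasis k : L2) = fourierLp 2 k := fun k =>
    congrFun coe_fourierBasis k
  rw [hcoe, hcoe]
  refine Lp.ext ?_
  filter_upwards [U_apply_coe m (fourierLp 2 i), coeFn_fourierLp 2 i,
    coeFn_fourierLp 2 (m + i)] with x h1 h2 h3
  rw [h1, h2, h3, ← fourier_add]

lemma U_norm (m : ℤ) (f : L2) : ‖U m f‖ = ‖f‖ := by
  rw [Lp.norm_def, Lp.norm_def]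
  congr 1
  rw [eLpNorm_congr_ae (U_apply_coe m f)]
  refine eLpNorm_congr_norm_ae ?_
  refine Filter.Eventually.of_forall fun x => ?_
  rw [norm_mul, norm_fourier, one_mul]

lemma Mult_U_norm (b : Linf) (m : ℤ) (f : L2) : ‖Mult b (U m f)‖ = ‖Mult b f‖ := by
  have h1 : (Mult b (U m f) : AddCircle (2 * π) → ℂ)
      =ᵐ[μT] fun x => b x * (fourier m x * f x) := by
    rw [Mult_apply]
    filter_upwards [mul2_coe b (U m f), U_apply_coe m f] with x h1 h2
    rw [h1, h2]
  rw [Lp.norm_def, Lp.norm_def]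
  congr 1
  rw [Mult_apply b f, eLpNorm_congr_ae h1, eLpNorm_congr_ae (mul2_coe b f)]
  refine eLpNorm_congr_norm_ae ?_
  refine Filter.Eventually.of_forall fun x => ?_
  simp only [norm_mul, norm_fourier]
  ring
lemma basis_mem_hardy {k : ℤ} (hk : 0 ≤ k) : (fourierBasis k : L2) ∈ Hardy := by
  intro n hn
  classical
  have hnk : n ≠ k := by omega
  rw [HilbertBasis.repr_self]
  exact lp.single_apply_ne _ _ _ hnk

lemma basis_mem_orth {k : ℤ} (hk : k < 0) : (fourierBasis k : L2) ∈ Hardyᗮ := by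
  rw [Submodule.mem_orthogonal]
  intro u hu
  have h1 : (inner ℂ (fourierBasis k : L2) u : ℂ) = fourierBasis.repr u k :=
    (fourierBasis.repr_apply_apply u k).symm
  rw [← inner_conj_symm, h1, hu k hk, map_zero]

lemma exists_shift (g : L2) (hg : g ∈ Submodule.span ℂ (Set.range (⇑fourierBasis))) :
    (∃ m : ℤ, U m g ∈ Hardyᗮ) ∧ (∃ m : ℤ, U m g ∈ Hardy) := by
  obtain ⟨c, rfl⟩ := Finsupp.mem_span_range_iff_exists_finsupp.mp hg
  set M : ℕ := c.support.sup fun i => i.natAbs with hM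
  have hsupp : ∀ i ∈ c.support, i.natAbs ≤ M := fun i hi => Finset.le_sup hi
  have hmap : ∀ m : ℤ, U m (c.sum fun i a => a • (fourierBasis i : L2))
      = c.sum fun i a => a • (fourierBasis (m + i) : L2) := by
    intro m
    rw [map_finsuppSum]
    refine Finsupp.sum_congr fun i _ => ?_
    simp only [ContinuousLinearMap.map_smul, U_apply_basis]
  constructor
  · refine ⟨-(M + 1), ?_⟩
    rw [hmap]
    rw [Finsupp.sum]
    refine Submodule.sum_mem _ fun i hi => ?_
    refine Submodule.smul_mem _ _ (basis_mem_orth ?_)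
    have := hsupp i hi
    omega
  · refine ⟨(M + 1 : ℕ), ?_⟩
    rw [hmap]
    rw [Finsupp.sum]
    refine Submodule.sum_mem _ fun i hi => ?_
    refine Submodule.smul_mem _ _ (basis_mem_hardy ?_)
    have := hsupp i hi
    omega

lemma dense_bound (T : L2 →L[ℂ] L2) {C : ℝ} (hC : 0 ≤ C)
    (h : ∀ g ∈ Submodule.span ℂ (Set.range (⇑fourierBasis)), ‖T g‖ ≤ C * ‖g‖) :
    ‖T‖ ≤ C := by
  refine T.opNorm_le_bound hC fun g => ?_
  have hcl : IsClosed {g : L2 | ‖T g‖ ≤ C * ‖g‖} :=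
    isClosed_le (T.continuous.norm) (continuous_const.mul continuous_norm)
  have hdense : closure ((Submodule.span ℂ (Set.range (⇑fourierBasis)) : Submodule ℂ L2) :
      Set L2) = Set.univ := by
    rw [← Submodule.topologicalClosure_coe, fourierBasis.dense_span]
    rfl
  have : g ∈ closure ((Submodule.span ℂ (Set.range (⇑fourierBasis)) : Submodule ℂ L2) :
      Set L2) := by rw [hdense]; trivial
  exact closure_minimal h hcl this

lemma mult_le_pairedS_b (a b : Linf) : ‖Mult b‖ ≤ ‖pairedS a b‖ := by
  refine dense_bound _ (norm_nonneg _) fun g hg => ?_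
  obtain ⟨⟨m, hm⟩, -⟩ := exists_shift g hg
  have hS : pairedS a b (U m g) = Mult b (U m g) := by
    rw [pairedS_apply, ← Mult_apply, ← Mult_apply, Pplus_eq_zero hm, Pminus_eq_self hm,
      map_zero, zero_add]
  calc ‖Mult b g‖ = ‖Mult b (U m g)‖ := (Mult_U_norm b m g).symm
    _ = ‖pairedS a b (U m g)‖ := by rw [hS]
    _ ≤ ‖pairedS a b‖ * ‖U m g‖ := (pairedS a b).le_opNorm _
    _ = ‖pairedS a b‖ * ‖g‖ := by rw [U_norm]

lemma mult_le_pairedS_a (a b : Linf) : ‖Mult a‖ ≤ ‖pairedS a b‖ := by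
  refine dense_bound _ (norm_nonneg _) fun g hg => ?_
  obtain ⟨-, ⟨m, hm⟩⟩ := exists_shift g hg
  have hS : pairedS a b (U m g) = Mult a (U m g) := by
    rw [pairedS_apply, ← Mult_apply, ← Mult_apply, Pplus_eq_self hm, Pminus_eq_zero hm,
      map_zero, add_zero]
  calc ‖Mult a g‖ = ‖Mult a (U m g)‖ := (Mult_U_norm a m g).symm
    _ = ‖pairedS a b (U m g)‖ := by rw [hS]
    _ ≤ ‖pairedS a b‖ * ‖U m g‖ := (pairedS a b).le_opNorm _
    _ = ‖pairedS a b‖ * ‖g‖ := by rw [U_norm]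
lemma norm_le_mult (b : Linf) : ‖b‖ ≤ ‖Mult b‖ := by
  refine le_of_forall_sub_le fun ε hε => ?_
  by_cases hle : ‖b‖ - ε ≤ 0
  · exact hle.trans (norm_nonneg _)
  push_neg at hle
  set t : ℝ := ‖b‖ - ε with ht
  set b' := (Lp.aestronglyMeasurable b).mk ⇑b with hb'def
  have hb' : ⇑b =ᵐ[μT] b' := (Lp.aestronglyMeasurable b).ae_eq_mk
  have hb'm : StronglyMeasurable b' := (Lp.aestronglyMeasurable b).stronglyMeasurable_mk
  set E : Set (AddCircle (2 * π)) := {x | t < ‖b' x‖} with hEdef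
  have hEm : MeasurableSet E := measurableSet_lt measurable_const hb'm.measurable.norm
  have hμE : μT E ≠ 0 := by
    intro h0
    have hbd : ∀ᵐ x ∂μT, ‖(b : AddCircle (2 * π) → ℂ) x‖ ≤ t := by
      have h1 : ∀ᵐ x ∂μT, ¬ (t < ‖b' x‖) := by
        rw [ae_iff]
        simpa using h0
      filter_upwards [h1, hb'] with x hx hbx
      rw [hbx]
      exact not_lt.mp hx
    have h2 := Lp.norm_le_of_ae_bound (le_of_lt hle) hbd
    simp only [ENNReal.toReal_top, inv_zero, Real.rpow_zero, one_mul] at h2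
    linarith
  have hμEtop : μT E ≠ ⊤ := measure_ne_top _ _
  set χ : L2 := (memLp_indicator_const 2 hEm (1 : ℂ) (Or.inr hμEtop)).toLp _ with hχdef
  have hχ : ⇑χ =ᵐ[μT] E.indicator (fun _ => (1 : ℂ)) := MemLp.coeFn_toLp _
  have hχnorm : ‖χ‖ = (μT E ^ (1 / 2 : ℝ)).toReal := by
    rw [hχdef, Lp.norm_toLp, eLpNorm_indicator_const hEm (by norm_num) (by norm_num)]
    norm_num
  have hχpos : 0 < ‖χ‖ := by
    rw [hχnorm]
    refine ENNReal.toReal_pos ?_ ?_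
    · simp [ENNReal.rpow_eq_zero_iff, hμE, hμEtop]
    · simp [ENNReal.rpow_eq_top_iff, hμE, hμEtop]
  have hkey : ENNReal.ofReal t * μT E ^ (1 / 2 : ℝ) ≤ eLpNorm (⇑(Mult b χ)) 2 μT := by
    have hcongr : (⇑(Mult b χ)) =ᵐ[μT] E.indicator b' := by
      rw [Mult_apply]
      filter_upwards [mul2_coe b χ, hχ, hb'] with x h1 h2 h3
      rw [h1, h2]
      by_cases hx : x ∈ E
      · simp [Set.indicator_of_mem hx, h3]
      · simp [Set.indicator_of_notMem hx]
    rw [eLpNorm_congr_ae hcongr,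
      eLpNorm_eq_lintegral_rpow_enorm_toReal (by norm_num) (by norm_num)]
    simp only [enorm_eq_nnnorm]
    have h2R : ((2 : ℝ≥0∞)).toReal = (2 : ℝ) := by norm_num
    rw [h2R]
    have hpt : (fun x => (‖E.indicator b' x‖₊ : ℝ≥0∞) ^ (2 : ℝ))
        = E.indicator fun x => (‖b' x‖₊ : ℝ≥0∞) ^ (2 : ℝ) := by
      funext x
      by_cases hx : x ∈ E
      · simp [Set.indicator_of_mem hx]
      · simp [Set.indicator_of_notMem hx, ENNReal.zero_rpow_of_pos]
    rw [hpt, lintegral_indicator hEm]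
    have hmono : ENNReal.ofReal t ^ (2 : ℝ) * μT E
        ≤ ∫⁻ x in E, (‖b' x‖₊ : ℝ≥0∞) ^ (2 : ℝ) ∂μT := by
      rw [← setLIntegral_const E (ENNReal.ofReal t ^ (2 : ℝ)),
        ← lintegral_indicator hEm, ← lintegral_indicator hEm]
      refine lintegral_mono fun x => ?_
      by_cases hx : x ∈ E
      · simp only [Set.indicator_of_mem hx]
        refine ENNReal.rpow_le_rpow ?_ (by norm_num)
        have hxt : t ≤ ‖b' x‖ := le_of_lt hx
        calc ENNReal.ofReal t ≤ ENNReal.ofReal ‖b' x‖ := ENNReal.ofReal_le_ofReal hxt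
          _ = ‖b' x‖₊ := ofReal_norm_eq_enorm _
      · simp [Set.indicator_of_notMem hx]
    refine le_trans ?_ (ENNReal.rpow_le_rpow hmono (by norm_num : (0:ℝ) ≤ 1 / 2))
    rw [ENNReal.mul_rpow_of_nonneg _ _ (by norm_num : (0:ℝ) ≤ 1 / 2), ← ENNReal.rpow_mul]
    norm_num
  have hfin : eLpNorm (⇑(Mult b χ)) 2 μT ≠ ⊤ := Lp.eLpNorm_ne_top _
  have hreal : t * ‖χ‖ ≤ ‖Mult b χ‖ := by
    have h3 := ENNReal.toReal_mono hfin hkey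
    rw [ENNReal.toReal_mul, ENNReal.toReal_ofReal (le_of_lt hle)] at h3
    rw [hχnorm, Lp.norm_def]
    exact h3
  have hop := (Mult b).le_opNorm χ
  exact le_of_mul_le_mul_right (hreal.trans hop) hχpos
lemma mult_norm (b : Linf) : ‖Mult b‖ = ‖b‖ :=
  le_antisymm
    (ContinuousLinearMap.opNorm_le_bound _ (norm_nonneg b) fun f => mul2_norm_le b f)
    (norm_le_mult b)

lemma norm_zero_of_ae {a : Linf} (ha : ∀ᵐ x ∂μT, (a : AddCircle (2 * π) → ℂ) x = 0) :
    ‖a‖ = 0 := by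
  rw [Lp.norm_def, eLpNorm_congr_ae (ha : ⇑a =ᵐ[μT] fun _ => 0)]
  rw [show (fun _ : AddCircle (2 * π) => (0 : ℂ)) = (0 : AddCircle (2 * π) → ℂ) from rfl,
    eLpNorm_zero]
  simp

lemma ae_zero_of_norm {a : Linf} (ha : ‖a‖ = 0) :
    ∀ᵐ x ∂μT, (a : AddCircle (2 * π) → ℂ) x = 0 := by
  have h0 : a = 0 := norm_eq_zero.mp ha
  rw [h0]
  filter_upwards [Lp.coeFn_zero ℂ ∞ μT] with x hx using hx

/-- `‖S_{a,b}‖ = ‖a‖_∞ + ‖b‖_∞` iff `a = 0` a.e. or `b = 0` a.e. -/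
theorem statement4 (a b : Linf) :
    ‖pairedS a b‖ = ‖a‖ + ‖b‖
      ↔ (∀ᵐ x ∂μT, a x = 0) ∨ (∀ᵐ x ∂μT, b x = 0) := by
  constructor
  · intro h
    by_contra hcon
    push_neg at hcon
    obtain ⟨ha, hb⟩ := hcon
    have hA : 0 < ‖a‖ := by
      rcases (norm_nonneg a).lt_or_eq with h' | h'
      · exact h'
      · exact absurd (ae_zero_of_norm h'.symm) (fun h => ha (h.mono fun x hx => not_not.mpr hx))
    have hB : 0 < ‖b‖ := by
      rcases (norm_nonneg b).lt_or_eq with h' | h'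
      · exact h'
      · exact absurd (ae_zero_of_norm h'.symm) (fun h => hb (h.mono fun x hx => not_not.mpr hx))
    have h1 := pairedS_norm_le_sqrt a b
    rw [h] at h1
    have hs : Real.sqrt (‖a‖ ^ 2 + ‖b‖ ^ 2) ^ 2 = ‖a‖ ^ 2 + ‖b‖ ^ 2 :=
      Real.sq_sqrt (by positivity)
    nlinarith [Real.sqrt_nonneg (‖a‖ ^ 2 + ‖b‖ ^ 2)]
  · intro h
    rcases h with ha | hb
    · have hA : ‖a‖ = 0 := norm_zero_of_ae ha
      have upper : ‖pairedS a b‖ ≤ ‖b‖ := by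
        refine ContinuousLinearMap.opNorm_le_bound _ (norm_nonneg b) fun f => ?_
        rw [pairedS_apply]
        calc ‖mul2 a (Pplus f) + mul2 b (Pminus f)‖
            ≤ ‖mul2 a (Pplus f)‖ + ‖mul2 b (Pminus f)‖ := norm_add_le _ _
          _ ≤ ‖a‖ * ‖Pplus f‖ + ‖b‖ * ‖Pminus f‖ :=
              add_le_add (mul2_norm_le a _) (mul2_norm_le b _)
          _ = ‖b‖ * ‖Pminus f‖ := by rw [hA]; ring
          _ ≤ ‖b‖ * ‖f‖ := mul_le_mul_of_nonneg_left (Pminus_norm_le f) (norm_nonneg b)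
      have lower : ‖b‖ ≤ ‖pairedS a b‖ := (mult_norm b) ▸ mult_le_pairedS_b a b
      rw [hA, zero_add]
      exact le_antisymm upper lower
    · have hB : ‖b‖ = 0 := norm_zero_of_ae hb
      have upper : ‖pairedS a b‖ ≤ ‖a‖ := by
        refine ContinuousLinearMap.opNorm_le_bound _ (norm_nonneg a) fun f => ?_
        rw [pairedS_apply]
        calc ‖mul2 a (Pplus f) + mul2 b (Pminus f)‖
            ≤ ‖mul2 a (Pplus f)‖ + ‖mul2 b (Pminus f)‖ := norm_add_le _ _
          _ ≤ ‖a‖ * ‖Pplus f‖ + ‖b‖ * ‖Pminus f‖ :=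
              add_le_add (mul2_norm_le a _) (mul2_norm_le b _)
          _ = ‖a‖ * ‖Pplus f‖ := by rw [hB]; ring
          _ ≤ ‖a‖ * ‖f‖ := mul_le_mul_of_nonneg_left (Pplus_norm_le f) (norm_nonneg a)
      have lower : ‖a‖ ≤ ‖pairedS a b‖ := (mult_norm a) ▸ mult_le_pairedS_a a b
      rw [hB, add_zero]
      exact le_antisymm upper lower

end
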